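/- The polynomial p(x,y) = y + x²y² has no real Jacobian mate: for every q ∈ ℝ[x,y] there is a point v ∈ ℝ² where the Jacobian determinant of (p,q) vanishes. -/

import Mathlib

open MvPolynomial

/-- The Jacobian determinant of the polynomial map `(p, q) : ℝ² → ℝ²`. -/
noncomputable def Jac (p q : MvPolynomial (Fin 2) ℝ) (v : Fin 2 → ℝ) : ℝ :=
  eval v (pderiv 0 p * pderiv 1 q - pderiv 1 p * pderiv 0 q)

open Filter

section Auxiliary

/-- Evaluation of a 2-variable polynomial is continuous in the point. -/
lemma continuous_eval' (r : MvPolynomial (Fin 2) ℝ) : Continuous fun v : Fin 2 → ℝ => eval v r := by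
  induction r using MvPolynomial.induction_on with
  | C a => simpa using continuous_const
  | add p q hp hq => simpa using hp.fun_add hq
  | mul_X p i hp => simpa using hp.fun_mul (continuous_apply i)

/-- Chain rule for evaluating a 2-variable polynomial along a differentiable curve `t ↦ (t, g t)`. -/
lemma hasDerivAt_eval_comp (r : MvPolynomial (Fin 2) ℝ) {g : ℝ → ℝ} {x g' : ℝ}
    (hg : HasDerivAt g g' x) :
    HasDerivAt (fun t : ℝ => eval ![t, g t] r)
      (eval ![x, g x] (pderiv 0 r) + g' * eval ![x, g x] (pderiv 1 r)) x := by
  induction r using MvPolynomial.induction_on with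
  | C a => simpa using hasDerivAt_const x a
  | add p q hp hq =>
      have := hp.fun_add hq
      simp only [eval_add, map_add] at *
      exact this.congr_deriv (by ring)
  | mul_X p i hp =>
      fin_cases i
      · have := hp.fun_mul (hasDerivAt_id x)
        simp only [eval_mul, eval_X, pderiv_mul, map_add, eval_add] at *
        refine this.congr_deriv ?_ <;>
          (simp [pderiv_X_self, pderiv_X_of_ne, Matrix.cons_val_zero, Matrix.cons_val_one]; ring)
      · have := hp.fun_mul hg
        simp only [eval_mul, eval_X, pderiv_mul, map_add, eval_add] at *
        refine this.congr_deriv ?_ <;>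
          (simp [pderiv_X_self, pderiv_X_of_ne, Matrix.cons_val_zero, Matrix.cons_val_one]; ring)

noncomputable def Jpoly (q : MvPolynomial (Fin 2) ℝ) : MvPolynomial (Fin 2) ℝ :=
  pderiv 0 (X 1 + X 0 ^ 2 * X 1 ^ 2) * pderiv 1 q - pderiv 1 (X 1 + X 0 ^ 2 * X 1 ^ 2) * pderiv 0 q

lemma evalJ (q : MvPolynomial (Fin 2) ℝ) (x y : ℝ) :
    eval ![x, y] (Jpoly q) =
      2*x*y^2 * eval ![x, y] (pderiv 1 q) - (1 + 2*x^2*y) * eval ![x, y] (pderiv 0 q) := by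
  have h0 : eval ![x, y] (pderiv 0 (X 1 + X 0 ^ 2 * X 1 ^ 2 : MvPolynomial (Fin 2) ℝ)) = 2*x*y^2 := by
    simp [pderiv_mul, pderiv_pow, pderiv_X_self, pderiv_X_of_ne]
    ring
  have h1 : eval ![x, y] (pderiv 1 (X 1 + X 0 ^ 2 * X 1 ^ 2 : MvPolynomial (Fin 2) ℝ)) = 1 + 2*x^2*y := by
    simp [pderiv_mul, pderiv_pow, pderiv_X_self, pderiv_X_of_ne]
    ring
  simp [Jpoly, h0, h1]
  ring

lemma Jpoly_neg (q : MvPolynomial (Fin 2) ℝ) (v : Fin 2 → ℝ) :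
    eval v (Jpoly (-q)) = - eval v (Jpoly q) := by
  simp [Jpoly, map_neg, mul_neg]
  ring

lemma g_deriv (q : MvPolynomial (Fin 2) ℝ) (x : ℝ) :
    HasDerivAt (fun s : ℝ => eval ![s, 0] q) (- eval ![x, 0] (Jpoly q)) x := by
  have h := hasDerivAt_eval_comp q (g := fun _ => (0:ℝ)) (x := x) (hasDerivAt_const x 0)
  have e : eval ![x, (0:ℝ)] (pderiv 0 q) + 0 * eval ![x, (0:ℝ)] (pderiv 1 q)
      = - eval ![x,0] (Jpoly q) := by
    rw [evalJ]; ring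
  rw [e] at h
  exact h

lemma Q_deriv (q : MvPolynomial (Fin 2) ℝ) {x : ℝ} (hx : x ≠ 0) :
    HasDerivAt (fun s : ℝ => eval ![s, -(s^2)⁻¹] q) (eval ![x, -(x^2)⁻¹] (Jpoly q)) x := by
  have hx2 : x^2 ≠ 0 := pow_ne_zero 2 hx
  have hy : HasDerivAt (fun s : ℝ => -(s^2)⁻¹) (2*x/(x^2)^2) x := by
    have h1 : HasDerivAt (fun s : ℝ => s^2) (2*x) x := by
      simpa using hasDerivAt_pow 2 x
    have h2 := (h1.inv hx2).fun_neg
    exact h2.congr_deriv (by ring)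
  have h := hasDerivAt_eval_comp q hy
  have e : eval ![x, -(x^2)⁻¹] (pderiv 0 q) + (2*x/(x^2)^2) * eval ![x, -(x^2)⁻¹] (pderiv 1 q)
      = eval ![x, -(x^2)⁻¹] (Jpoly q) := by
    rw [evalJ]
    field_simp
    ring
  rw [e] at h
  exact h

lemma branch (q : MvPolynomial (Fin 2) ℝ) (hq : ∀ x y : ℝ, 0 < eval ![x, y] (Jpoly q))
    {X t : ℝ} (hX : 1 ≤ X) (ht0 : 0 < t) (ht1 : t < 1) :
    eval ![X, (-1 - Real.sqrt (1 - t))/(2*X^2)] q ≤ eval ![X, (-1 + Real.sqrt (1 - t))/(2*X^2)] q := by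
  have hX0 : (0:ℝ) < X := lt_of_lt_of_le one_pos hX
  have hXne : X ≠ 0 := hX0.ne'
  set st := Real.sqrt t with hst
  have hst0 : 0 < st := Real.sqrt_pos.mpr ht0
  have hst1 : st < 1 := by
    rw [hst, show (1:ℝ) = Real.sqrt 1 by simp]
    exact Real.sqrt_lt_sqrt ht0.le ht1
  have hstsq : st^2 = t := Real.sq_sqrt ht0.le
  set xc := X / st with hxc
  have hXxc : X < xc := by
    rw [hxc, lt_div_iff₀ hst0]
    nlinarith
  have hxc0 : 0 < xc := lt_trans hX0 hXxc
  set u : ℝ → ℝ := fun x => 1 - t*x^2/X^2 with hu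
  have huxc : u xc = 0 := by
    rw [hu]
    simp only []
    rw [hxc]
    field_simp
    nlinarith [hstsq]
  have hupos : ∀ x ∈ Set.Ico X xc, 0 < u x := by
    intro x hx
    have hx0 : 0 < x := lt_of_lt_of_le hX0 hx.1
    have : x^2 < xc^2 := by nlinarith [hx.2]
    have : t*x^2 < t*xc^2 := by nlinarith
    have hxct : t*xc^2 = X^2 := by
      rw [hxc]; field_simp; nlinarith [hstsq]
    show 0 < 1 - t*x^2/X^2
    rw [sub_pos, div_lt_one (by positivity)]
    nlinarith
  set D : ℝ → ℝ := fun x => Real.sqrt (u x) with hD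
  set yp : ℝ → ℝ := fun x => (-1 + D x)/(2*x^2) with hyp
  set ym : ℝ → ℝ := fun x => (-1 - D x)/(2*x^2) with hym
  -- derivative package
  have pkg : ∀ x ∈ Set.Ioo X xc,
      deriv (fun s : ℝ => eval ![s, yp s] q) x < 0 ∧
      0 < deriv (fun s : ℝ => eval ![s, ym s] q) x := by
    intro x hx
    have hx0 : 0 < x := lt_of_lt_of_le hX0 hx.1.le
    have hxne : x ≠ 0 := hx0.ne'
    have hux : 0 < u x := hupos x ⟨hx.1.le, hx.2⟩
    have hDx0 : 0 < D x := Real.sqrt_pos.mpr hux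
    have hDsq : D x ^ 2 = u x := Real.sq_sqrt hux.le
    have hu' : HasDerivAt u (-(t*(2*x))/X^2) x := by
      have h1 : HasDerivAt (fun s : ℝ => s^2) (2*x) x := by simpa using hasDerivAt_pow 2 x
      have h2 := ((h1.const_mul t).div_const (X^2)).const_sub 1
      exact h2.congr_deriv (by ring)
    have hD' : HasDerivAt D (1/(2*D x) * (-(t*(2*x))/X^2)) x :=
      (Real.hasDerivAt_sqrt hux.ne').comp x hu'
    have hden : HasDerivAt (fun s : ℝ => 2*s^2) (4*x) x := by
      have h1 : HasDerivAt (fun s : ℝ => s^2) (2*x) x := by simpa using hasDerivAt_pow 2 x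
      have := h1.const_mul (2:ℝ)
      exact this.congr_deriv (by ring)
    have hx2ne : 2*x^2 ≠ 0 := by positivity
    have hypd : HasDerivAt yp
        (((1/(2*D x) * (-(t*(2*x))/X^2)) * (2*x^2) - (-1 + D x)*(4*x)) / (2*x^2)^2) x := by
      have hnum : HasDerivAt (fun s : ℝ => -1 + D s) (1/(2*D x) * (-(t*(2*x))/X^2)) x :=
        hD'.const_add (-1)
      exact hnum.div hden hx2ne
    have hymd : HasDerivAt ym
        ((-(1/(2*D x) * (-(t*(2*x))/X^2)) * (2*x^2) - (-1 - D x)*(4*x)) / (2*x^2)^2) x := by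
      have hnum : HasDerivAt (fun s : ℝ => -1 - D s) (-(1/(2*D x) * (-(t*(2*x))/X^2))) x :=
        hD'.const_sub (-1)
      exact hnum.div hden hx2ne
    have ha : 1 + 2*x^2*(yp x) = D x := by
      rw [hyp]
      field_simp
      ring
    have ha' : 1 + 2*x^2*(ym x) = -(D x) := by
      rw [hym]
      field_simp
      ring
    have hDsq2 : D x^2 * X^2 = X^2 - t*x^2 := by
      have hux' : u x = 1 - t*x^2/X^2 := rfl
      rw [hDsq, hux']
      field_simp
    have hb : D x * (((1/(2*D x) * (-(t*(2*x))/X^2)) * (2*x^2) - (-1 + D x)*(4*x)) / (2*x^2)^2)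
        = -2*x*(yp x)^2 := by
      rw [hyp]
      field_simp
      linear_combination (-2:ℝ) * hDsq2
    have hb' : D x * ((-(1/(2*D x) * (-(t*(2*x))/X^2)) * (2*x^2) - (-1 - D x)*(4*x)) / (2*x^2)^2)
        = 2*x*(ym x)^2 := by
      rw [hym]
      field_simp
      linear_combination (2:ℝ) * hDsq2
    have hFpd := hasDerivAt_eval_comp q hypd
    have hFmd := hasDerivAt_eval_comp q hymd
    constructor
    · rw [hFpd.deriv]
      set QX := eval ![x, yp x] (pderiv 0 q)
      set QY := eval ![x, yp x] (pderiv 1 q)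
      set E := ((1/(2*D x) * (-(t*(2*x))/X^2)) * (2*x^2) - (-1 + D x)*(4*x)) / (2*x^2)^2 with hE
      have hV : D x * (QX + E*QY) = - eval ![x, yp x] (Jpoly q) := by
        have e1 : D x * (QX + E*QY) = D x * QX + (D x * E) * QY := by ring
        rw [e1, hb, evalJ, ← ha]
        ring
      have hDV : D x * (QX + E*QY) < 0 := by
        rw [hV]
        have := hq x (yp x)
        linarith
      rcases mul_neg_iff.mp hDV with ⟨h1, h2⟩ | ⟨h1, h2⟩
      · exact h2
      · exact absurd hDx0 (by linarith)
    · rw [hFmd.deriv]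
      set QX := eval ![x, ym x] (pderiv 0 q)
      set QY := eval ![x, ym x] (pderiv 1 q)
      set E := (-(1/(2*D x) * (-(t*(2*x))/X^2)) * (2*x^2) - (-1 - D x)*(4*x)) / (2*x^2)^2 with hE
      have hV : D x * (QX + E*QY) = eval ![x, ym x] (Jpoly q) := by
        have e1 : D x * (QX + E*QY) = D x * QX + (D x * E) * QY := by ring
        rw [e1, hb', evalJ, ha']
        ring
      have hDV : 0 < D x * (QX + E*QY) := by
        rw [hV]
        exact hq x (ym x)
      rcases mul_pos_iff.mp hDV with ⟨h1, h2⟩ | ⟨h1, h2⟩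
      · exact h2
      · exact absurd hDx0 (by linarith)
  -- continuity
  have hucont : Continuous u := by
    rw [hu]; fun_prop
  have hDcont : Continuous D := by
    rw [hD]; exact Real.continuous_sqrt.comp hucont
  have hx2cont : Continuous (fun x : ℝ => 2*x^2) := by fun_prop
  have hx2ne' : ∀ x ∈ Set.Icc X xc, 2*x^2 ≠ 0 := by
    intro x hx
    have : 0 < x := lt_of_lt_of_le hX0 hx.1
    positivity
  have hypc : ContinuousOn yp (Set.Icc X xc) := by
    rw [hyp]
    exact ((continuous_const.add hDcont).continuousOn).div hx2cont.continuousOn hx2ne'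
  have hymc : ContinuousOn ym (Set.Icc X xc) := by
    rw [hym]
    exact ((continuous_const.sub hDcont).continuousOn).div hx2cont.continuousOn hx2ne'
  have curvep : ContinuousOn (fun x : ℝ => (![x, yp x] : Fin 2 → ℝ)) (Set.Icc X xc) := by
    apply continuousOn_pi.mpr
    intro i
    fin_cases i
    · simpa using continuousOn_id' _
    · simpa using hypc
  have curvem : ContinuousOn (fun x : ℝ => (![x, ym x] : Fin 2 → ℝ)) (Set.Icc X xc) := by
    apply continuousOn_pi.mpr
    intro i
    fin_cases i
    · simpa using continuousOn_id' _
    · simpa using hymc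
  have hFpc : ContinuousOn (fun s : ℝ => eval ![s, yp s] q) (Set.Icc X xc) :=
    (continuous_eval' q).comp_continuousOn curvep
  have hFmc : ContinuousOn (fun s : ℝ => eval ![s, ym s] q) (Set.Icc X xc) :=
    (continuous_eval' q).comp_continuousOn curvem
  have anti : StrictAntiOn (fun s : ℝ => eval ![s, yp s] q) (Set.Icc X xc) := by
    apply strictAntiOn_of_deriv_neg (convex_Icc X xc) hFpc
    intro x hx
    rw [interior_Icc] at hx
    exact (pkg x hx).1
  have mono : StrictMonoOn (fun s : ℝ => eval ![s, ym s] q) (Set.Icc X xc) := by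
    apply strictMonoOn_of_deriv_pos (convex_Icc X xc) hFmc
    intro x hx
    rw [interior_Icc] at hx
    exact (pkg x hx).2
  have hmemX : X ∈ Set.Icc X xc := ⟨le_refl _, hXxc.le⟩
  have hmemxc : xc ∈ Set.Icc X xc := ⟨hXxc.le, le_refl _⟩
  have h1 : eval ![xc, yp xc] q < eval ![X, yp X] q := anti hmemX hmemxc hXxc
  have h2 : eval ![X, ym X] q < eval ![xc, ym xc] q := mono hmemX hmemxc hXxc
  have hD0 : D xc = 0 := by
    rw [hD]
    show Real.sqrt (u xc) = 0
    rw [huxc, Real.sqrt_zero]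
  have heq : yp xc = ym xc := by
    rw [hyp, hym]
    show (-1 + D xc)/(2*xc^2) = (-1 - D xc)/(2*xc^2)
    rw [hD0]
    ring
  have huX : u X = 1 - t := by
    rw [hu]
    show 1 - t*X^2/X^2 = 1 - t
    field_simp
  have hDX : D X = Real.sqrt (1 - t) := by
    rw [hD]
    show Real.sqrt (u X) = Real.sqrt (1-t)
    rw [huX]
  have e2 : yp X = (-1 + Real.sqrt (1-t))/(2*X^2) := by
    rw [hyp]
    show (-1 + D X)/(2*X^2) = _
    rw [hDX]
  have e3 : ym X = (-1 - Real.sqrt (1-t))/(2*X^2) := by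
    rw [hym]
    show (-1 - D X)/(2*X^2) = _
    rw [hDX]
  rw [← e2, ← e3]
  rw [heq] at h1
  exact le_of_lt (lt_trans h2 h1)

lemma gQ (q : MvPolynomial (Fin 2) ℝ) (hq : ∀ x y : ℝ, 0 < eval ![x, y] (Jpoly q))
    {X : ℝ} (hX : 1 ≤ X) : eval ![X, -(X^2)⁻¹] q ≤ eval ![X, 0] q := by
  have hX0 : (0:ℝ) < X := lt_of_lt_of_le one_pos hX
  have hc1 : Continuous (fun t : ℝ => (-1 + Real.sqrt (1-t))/(2*X^2)) :=
    (continuous_const.add (Real.continuous_sqrt.comp (continuous_const.sub continuous_id))).div_const _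
  have hc2 : Continuous (fun t : ℝ => (-1 - Real.sqrt (1-t))/(2*X^2)) :=
    (continuous_const.sub (Real.continuous_sqrt.comp (continuous_const.sub continuous_id))).div_const _
  have curveA : Continuous (fun t : ℝ => (![X, (-1 + Real.sqrt (1-t))/(2*X^2)] : Fin 2 → ℝ)) := by
    apply continuous_pi
    intro i
    fin_cases i
    · simpa using continuous_const
    · simpa using hc1
  have curveB : Continuous (fun t : ℝ => (![X, (-1 - Real.sqrt (1-t))/(2*X^2)] : Fin 2 → ℝ)) := by
    apply continuous_pi
    intro i
    fin_cases i
    · simpa using continuous_const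
    · simpa using hc2
  have hAc : Continuous (fun t : ℝ => eval ![X, (-1 + Real.sqrt (1-t))/(2*X^2)] q) :=
    (continuous_eval' q).comp curveA
  have hBc : Continuous (fun t : ℝ => eval ![X, (-1 - Real.sqrt (1-t))/(2*X^2)] q) :=
    (continuous_eval' q).comp curveB
  have hA0 : (-1 + Real.sqrt (1-(0:ℝ)))/(2*X^2) = 0 := by
    norm_num
  have hB0 : (-1 - Real.sqrt (1-(0:ℝ)))/(2*X^2) = -(X^2)⁻¹ := by
    rw [show (1:ℝ) - 0 = 1 by ring, Real.sqrt_one]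
    field_simp
    ring
  have hA : Tendsto (fun t : ℝ => eval ![X, (-1 + Real.sqrt (1-t))/(2*X^2)] q) (nhdsWithin 0 (Set.Ioi 0))
      (nhds (eval ![X, 0] q)) := by
    have := (hAc.tendsto 0).mono_left (nhdsWithin_le_nhds (s := Set.Ioi (0:ℝ)))
    rwa [hA0] at this
  have hB : Tendsto (fun t : ℝ => eval ![X, (-1 - Real.sqrt (1-t))/(2*X^2)] q) (nhdsWithin 0 (Set.Ioi 0))
      (nhds (eval ![X, -(X^2)⁻¹] q)) := by
    have := (hBc.tendsto 0).mono_left (nhdsWithin_le_nhds (s := Set.Ioi (0:ℝ)))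
    rwa [hB0] at this
  apply le_of_tendsto_of_tendsto hB hA
  apply Filter.eventually_of_mem (Ioo_mem_nhdsGT_of_mem (Set.mem_Ico.mpr ⟨le_refl _, one_pos⟩))
  intro t ht
  exact branch q hq hX ht.1 ht.2

lemma eval_poly1 (q : MvPolynomial (Fin 2) ℝ) (x : ℝ) :
    Polynomial.eval x (MvPolynomial.eval₂ Polynomial.C ![Polynomial.X, 0] q) = eval ![x, 0] q := by
  induction q using MvPolynomial.induction_on with
  | C a => simp
  | add p q hp hq => simp [hp, hq]
  | mul_X p i hp =>
      fin_cases i <;> simp [hp]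


lemma key (q : MvPolynomial (Fin 2) ℝ) (hq : ∀ x y : ℝ, 0 < eval ![x, y] (Jpoly q)) : False := by
  -- Q is monotone on [1,∞)
  have hQc : ContinuousOn (fun s : ℝ => eval ![s, -(s^2)⁻¹] q) (Set.Ici 1) := by
    apply (continuous_eval' q).comp_continuousOn
    apply continuousOn_pi.mpr
    intro i
    fin_cases i
    · simpa using continuousOn_id' _
    · show ContinuousOn (fun s : ℝ => -(s^2)⁻¹) (Set.Ici 1)
      apply ContinuousOn.neg
      apply ContinuousOn.inv₀ (by fun_prop)
      intro x hx
      have : (1:ℝ) ≤ x := hx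
      positivity
  have hQmono : StrictMonoOn (fun s : ℝ => eval ![s, -(s^2)⁻¹] q) (Set.Ici 1) := by
    apply strictMonoOn_of_deriv_pos (convex_Ici 1) hQc
    intro x hx
    rw [interior_Ici] at hx
    have hxne : x ≠ 0 := by
      have : (1:ℝ) < x := hx
      positivity
    rw [(Q_deriv q hxne).deriv]
    exact hq x _
  -- g is antitone on [1,∞)
  have hgc : ContinuousOn (fun s : ℝ => eval ![s, 0] q) (Set.Ici 1) := by
    apply (continuous_eval' q).comp_continuousOn
    apply continuousOn_pi.mpr
    intro i
    fin_cases i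
    · simpa using continuousOn_id' _
    · simpa using continuousOn_const
  have hganti : StrictAntiOn (fun s : ℝ => eval ![s, 0] q) (Set.Ici 1) := by
    apply strictAntiOn_of_deriv_neg (convex_Ici 1) hgc
    intro x hx
    rw [(g_deriv q x).deriv]
    have := hq x 0
    linarith
  -- bounds for g on [1,∞)
  set B : ℝ := eval ![(1:ℝ), -((1:ℝ)^2)⁻¹] q with hB
  set G : ℝ := eval ![(1:ℝ), 0] q with hG
  have hbound : ∀ X : ℝ, 1 ≤ X → B ≤ eval ![X, 0] q ∧ eval ![X, 0] q ≤ G := by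
    intro X hX
    constructor
    · calc B ≤ eval ![X, -(X^2)⁻¹] q := by
              rcases eq_or_lt_of_le hX with h | h
              · rw [hB, ← h]
              · exact (hQmono (Set.mem_Ici.mpr (le_refl 1)) (Set.mem_Ici.mpr hX) h).le
          _ ≤ eval ![X, 0] q := gQ q hq hX
    · rcases eq_or_lt_of_le hX with h | h
      · rw [hG, ← h]
      · exact (hganti (Set.mem_Ici.mpr (le_refl 1)) (Set.mem_Ici.mpr hX) h).le
  -- the univariate polynomial x ↦ q(x,0)
  set P1 := MvPolynomial.eval₂ Polynomial.C ![Polynomial.X, 0] q with hP1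
  rcases le_or_gt P1.degree 0 with hdeg | hdeg
  · -- constant: zero derivative contradicts negative derivative
    have ha := Polynomial.eq_C_of_degree_le_zero hdeg
    have hconst : (fun s : ℝ => eval ![s, 0] q) = fun _ => P1.coeff 0 := by
      funext s
      rw [← eval_poly1 q s, ← hP1, ha]
      simp
    have h1 := g_deriv q 1
    rw [hconst] at h1
    have h2 := h1.unique (hasDerivAt_const 1 _)
    have := hq 1 0
    linarith [h2]
  · -- nonconstant: unbounded, contradiction
    have htop := Polynomial.abs_tendsto_atTop P1 hdeg
    have hM := (htop.eventually_gt_atTop (|G| + |B|)).and (eventually_ge_atTop (1:ℝ))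
    obtain ⟨x, hx1, hx2⟩ := hM.exists
    have hb := hbound x hx2
    rw [eval_poly1 q x] at hx1
    have h1 : eval ![x,0] q ≤ |G| := le_trans hb.2 (le_abs_self G)
    have h2 : -|B| ≤ eval ![x,0] q := le_trans (neg_abs_le B) hb.1
    have : |eval ![x,0] q| ≤ |G| + |B| := by
      rw [abs_le]
      constructor <;> linarith [abs_nonneg G, abs_nonneg B]
    linarith

lemma jac_eq (q : MvPolynomial (Fin 2) ℝ) (v : Fin 2 → ℝ) :
    Jac (X 1 + X 0 ^ 2 * X 1 ^ 2) q v = eval v (Jpoly q) := rfl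


theorem no_jacobian_mate_y_add_x2y2 :
    ∀ q : MvPolynomial (Fin 2) ℝ,
      ∃ v : Fin 2 → ℝ, Jac (X 1 + X 0 ^ 2 * X 1 ^ 2) q v = 0 := by
  intro q
  by_contra hcon
  push_neg at hcon
  have hne : ∀ x y : ℝ, eval ![x, y] (Jpoly q) ≠ 0 := by
    intro x y
    rw [← jac_eq]
    exact hcon ![x, y]
  -- continuity of segments
  have seg : ∀ x y : ℝ, Continuous fun t : ℝ => eval ![t * x, t * y] (Jpoly q) := by
    intro x y
    apply (continuous_eval' (Jpoly q)).comp
    apply continuous_pi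
    intro i
    fin_cases i
    · simpa using continuous_id.fun_mul continuous_const
    · simpa using continuous_id.fun_mul continuous_const
  -- sign constancy
  have hsign : (∀ x y : ℝ, 0 < eval ![x, y] (Jpoly q)) ∨ (∀ x y : ℝ, eval ![x, y] (Jpoly q) < 0) := by
    rcases lt_or_gt_of_ne (hne 0 0) with h0 | h0
    · right
      intro x y
      by_contra hpos
      have hp : 0 < eval ![x, y] (Jpoly q) := lt_of_le_of_ne (not_lt.mp hpos) (Ne.symm (hne x y))
      have h00 : eval ![(0:ℝ) * x, (0:ℝ) * y] (Jpoly q) < 0 := by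
        norm_num
        convert h0 using 2
      have h11 : 0 < eval ![(1:ℝ) * x, (1:ℝ) * y] (Jpoly q) := by
        norm_num
        convert hp using 2
      have := intermediate_value_Icc (le_of_lt one_pos) (seg x y).continuousOn
      have h0mem : (0:ℝ) ∈ Set.Icc (eval ![(0:ℝ)*x, (0:ℝ)*y] (Jpoly q)) (eval ![(1:ℝ)*x, (1:ℝ)*y] (Jpoly q)) :=
        ⟨h00.le, h11.le⟩
      obtain ⟨t, _, ht⟩ := this h0mem
      exact hne (t*x) (t*y) ht
    · left
      intro x y
      by_contra hneg
      have hp : eval ![x, y] (Jpoly q) < 0 := lt_of_le_of_ne (not_lt.mp hneg) (hne x y)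
      have h00 : 0 < eval ![(0:ℝ) * x, (0:ℝ) * y] (Jpoly q) := by
        norm_num
        convert h0 using 2
      have h11 : eval ![(1:ℝ) * x, (1:ℝ) * y] (Jpoly q) < 0 := by
        norm_num
        convert hp using 2
      have := intermediate_value_Icc' (le_of_lt one_pos) (seg x y).continuousOn
      have h0mem : (0:ℝ) ∈ Set.Icc (eval ![(1:ℝ)*x, (1:ℝ)*y] (Jpoly q)) (eval ![(0:ℝ)*x, (0:ℝ)*y] (Jpoly q)) :=
        ⟨h11.le, h00.le⟩
      obtain ⟨t, _, ht⟩ := this h0mem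
      exact hne (t*x) (t*y) ht
  rcases hsign with hpos | hneg
  · exact key q hpos
  · apply key (-q)
    intro x y
    rw [Jpoly_neg]
    linarith [hneg x y]
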